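/- Let T : X → X be a continuous map of a compact metric space. For every ε > 0 there exists δ > 0 such that for every δ-pseudotrajectory {p_k}_{k≥0}, the set K_ε = {k ≥ 0 : p_k ∈ U_ε(R(X,T))} satisfies liminf_{N→∞} #(K_ε ∩ [0,N])/N > 1 − ε, where R(X,T) denotes the set of recurrent points. -/

import Mathlib

open Metric Filter Set Topology
open scoped Classical

variable {X : Type*}

/-- A set of naturals is syndetic: bounded gaps. -/
def Syndetic (S : Set ℕ) : Prop := ∃ n : ℕ, ∀ m : ℕ, ∃ k ∈ S, m ≤ k ∧ k ≤ m + n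

/-- Forward orbit of a point. -/
def fwdOrbit (T : X → X) (y : X) : Set X := Set.range fun k : ℕ => T^[k] y

/-- A point is minimal (almost periodic): its forward orbit closure is a minimal set. -/
def IsMinimalPt [TopologicalSpace X] (T : X → X) (y : X) : Prop :=
  ∀ z ∈ closure (fwdOrbit T y), closure (fwdOrbit T z) = closure (fwdOrbit T y)

/-- ℤ-iteration of a homeomorphism. -/
noncomputable def zIter [TopologicalSpace X] (T : X ≃ₜ X) (n : ℤ) : X → X :=
  if 0 ≤ n then (⇑T)^[n.toNat] else (⇑T.symm)^[(-n).toNat]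

/-- `A` is an `ε`-network: every point of the space is within `ε` of `A`. -/
def IsNet [PseudoMetricSpace X] (ε : ℝ) (A : Set X) : Prop :=
  ∀ x : X, ∃ a ∈ A, dist x a ≤ ε

/-- A point is nonwandering (w.r.t. forward iterates). -/
def NonWandering [TopologicalSpace X] (T : X → X) (x : X) : Prop :=
  ∀ U : Set X, IsOpen U → x ∈ U → ∃ k : ℕ, 1 ≤ k ∧ ((fun p => T^[k] p) '' U ∩ U).Nonempty

/-- One-sided `d`-pseudotrajectory. -/
def IsPseudoTraj [PseudoMetricSpace X] (T : X → X) (d : ℝ) (x : ℕ → X) : Prop :=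
  ∀ k : ℕ, dist (x (k + 1)) (T (x k)) ≤ d

/-- Two-sided `d`-pseudotrajectory. -/
def IsPseudoTrajZ [PseudoMetricSpace X] (T : X → X) (d : ℝ) (x : ℤ → X) : Prop :=
  ∀ k : ℤ, dist (x (k + 1)) (T (x k)) ≤ d

/-- A chain recurrent point. -/
def ChainRec [PseudoMetricSpace X] (T : X → X) (x : X) : Prop :=
  ∀ d > (0 : ℝ), ∃ n : ℕ, 1 ≤ n ∧ ∃ c : ℕ → X, c 0 = x ∧ c n = x ∧
    ∀ k < n, dist (c (k + 1)) (T (c k)) ≤ d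

/-- ω-limit set of a point under a map. -/
def omegaSet [TopologicalSpace X] (T : X → X) (y : X) : Set X :=
  {p | ∃ φ : ℕ → ℕ, StrictMono φ ∧ Tendsto (fun n => T^[φ n] y) atTop (nhds p)}

/-- The set of recurrent points (`x ∈ ω(x)`). -/
def RecurrentPts [TopologicalSpace X] (T : X → X) : Set X := {x | x ∈ omegaSet T x}

/-- The multishadowing property (for homeomorphisms, two-sided). -/
def Multishadowing [PseudoMetricSpace X] (T : X ≃ₜ X) : Prop :=
  ∀ ε > (0 : ℝ), ∃ d > (0 : ℝ), ∀ x : ℤ → X, IsPseudoTrajZ (⇑T) d x →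
    ∃ Y : Finset X, ∀ k : ℤ, ∃ y ∈ Y, dist (x k) (zIter T k y) < ε

/-- Topological support of a measure: points all of whose open neighborhoods
have positive measure. -/
def msupp [TopologicalSpace X] [MeasurableSpace X] (μ : MeasureTheory.Measure X) : Set X :=
  {x | ∀ U : Set X, IsOpen U → x ∈ U → 0 < μ U}

/-- Counting function for density computations. -/
noncomputable def cnt (K : Set ℕ) (N : ℕ) : ℝ :=
  ((Finset.range (N + 1)).filter (· ∈ K)).card



open MeasureTheory TopologicalSpace BoundedContinuousFunction
open scoped NNReal ENNReal
set_option maxHeartbeats 1000000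

lemma mem_recur_of_freq {X : Type*} [MetricSpace X] {T : X → X} {x : X}
    (h : ∀ s ∈ nhds x, ∃ᶠ n in atTop, T^[n] x ∈ s) : x ∈ RecurrentPts T := by
  have key : ∀ m k : ℕ, ∃ n, k ≤ n ∧ T^[n] x ∈ ball x (1/(m+1)) := by
    intro m k
    have := (h (ball x (1/(m+1))) (ball_mem_nhds x (by positivity)))
    rw [frequently_atTop] at this
    obtain ⟨n, hn, hmem⟩ := this k
    exact ⟨n, hn, hmem⟩
  choose g hg1 hg2 using key
  set φ : ℕ → ℕ := fun k => Nat.rec (g 0 0) (fun k ih => g (k+1) (ih+1)) k with hφ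
  have hmono : StrictMono φ := by
    apply strictMono_nat_of_lt_succ
    intro n
    have : φ (n+1) = g (n+1) (φ n + 1) := rfl
    rw [this]
    exact lt_of_lt_of_le (Nat.lt_succ_self _) (hg1 (n+1) (φ n + 1))
  have hdist : ∀ k, dist (T^[φ k] x) x < 1/(k+1) := by
    intro k
    cases k with
    | zero => exact mem_ball.1 (hg2 0 0)
    | succ n => exact mem_ball.1 (hg2 (n+1) (φ n + 1))
  refine ⟨φ, hmono, ?_⟩
  rw [Metric.tendsto_atTop]
  intro ε hε
  obtain ⟨K, hK⟩ := exists_nat_gt (1/ε)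
  refine ⟨K, fun k hk => lt_of_lt_of_le (hdist k) ?_⟩
  rw [div_le_iff₀ (by positivity)]
  rw [div_lt_iff₀ hε] at hK
  have hkK : (K:ℝ) ≤ k := Nat.cast_le.2 hk
  nlinarith [hε.le]

lemma key [MetricSpace X] [CompactSpace X] (T : X → X) (hT : Continuous T)
    {ε : ℝ} (hε : 0 < ε) (hε1 : ε ≤ 1) :
    ∃ δ > (0 : ℝ), ∀ p : ℕ → X, IsPseudoTraj T δ p →
      1 - ε < Filter.liminf
        (fun N : ℕ => cnt {k : ℕ | p k ∈ Metric.thickening ε (RecurrentPts T)} N / (N : ℝ))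
        atTop := by
  by_contra hcon
  push_neg at hcon
  choose p hp hlim using fun n : ℕ => hcon (1/(n+1)) (by positivity)
  set R : Set X := RecurrentPts T with hR
  set Θ : Set X := Metric.thickening ε R with hΘ
  set F : Set X := Θᶜ with hF
  have hDbdd : ∀ n : ℕ, IsBoundedUnder (· ≤ ·) atTop
      (fun N : ℕ => cnt {k : ℕ | p n k ∈ Θ} N / (N : ℝ)) := by
    intro n
    apply isBoundedUnder_of
    refine ⟨2, fun N => ?_⟩
    rcases Nat.eq_zero_or_pos N with h0 | hN
    · simp [h0, cnt]
    have hN0 : (0:ℝ) < N := by exact_mod_cast hN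
    have hcard : (((Finset.range (N + 1)).filter (· ∈ {k : ℕ | p n k ∈ Θ})).card : ℝ)
        ≤ (N + 1 : ℝ) := by
      exact_mod_cast Finset.card_le_card (Finset.filter_subset _ _) |>.trans
        (le_of_eq (Finset.card_range (N+1)))
    simp only [cnt]
    rw [div_le_iff₀ hN0]
    have : (N:ℝ) + 1 ≤ 2 * N := by linarith [hN0, (by exact_mod_cast hN : (1:ℝ) ≤ N)]
    linarith
  have hfreq : ∀ n : ℕ, ∃ N : ℕ, n + 1 ≤ N ∧
      cnt {k : ℕ | p n k ∈ Θ} N / (N : ℝ) < 1 - ε/2 := by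
    intro n
    have hco : IsCoboundedUnder (· ≥ ·) atTop (fun N : ℕ => cnt {k : ℕ | p n k ∈ Θ} N / (N : ℝ)) :=
      (hDbdd n).isCoboundedUnder_flip
    have := frequently_lt_of_liminf_lt hco
      (lt_of_le_of_lt (hlim n) (show (1:ℝ) - ε < 1 - ε/2 by linarith))
    rw [frequently_atTop] at this
    obtain ⟨N, hN1, hN2⟩ := this (n+1)
    exact ⟨N, hN1, hN2⟩
  choose N hN1 hN2 using hfreq
  set M : ℕ → ℕ := fun n => N n + 1 with hM
  have hM1 : ∀ n : ℕ, (1:ℝ) ≤ N n := by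
    intro n; exact_mod_cast (Nat.succ_le_of_lt (Nat.lt_of_lt_of_le n.succ_pos (hN1 n)))
  have hMn : ∀ n : ℕ, (n:ℝ) + 1 ≤ M n := by
    intro n; have := hN1 n; exact_mod_cast Nat.le_succ_of_le this
  have hM0 : ∀ n : ℕ, ((M n : ℝ≥0)) ≠ 0 := by
    intro n; simp [hM]
  have hM0' : ∀ n : ℕ, (0:ℝ) < (M n : ℝ) := by
    intro n; have := hMn n; positivity
  have hcount : ∀ n : ℕ,
      (ε/2) * (M n : ℝ) ≤ (((Finset.range (M n)).filter (fun k => p n k ∈ F)).card : ℝ) := by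
    intro n
    have hsplit := Finset.card_filter_add_card_filter_not
      (s := Finset.range (M n)) (fun k => p n k ∈ Θ)
    have hcnt : cnt {k : ℕ | p n k ∈ Θ} (N n)
        = (((Finset.range (M n)).filter (fun k => p n k ∈ Θ)).card : ℝ) := by
      simp only [cnt]
      norm_num [hM]
    have hN2' := hN2 n
    rw [hcnt, div_lt_iff₀ (by linarith [hM1 n])] at hN2'
    have hFeq : ((Finset.range (M n)).filter (fun k => ¬ (p n k ∈ Θ))).card
        = ((Finset.range (M n)).filter (fun k => p n k ∈ F)).card := by
      congr 1
    have hsplit' : (((Finset.range (M n)).filter (fun k => p n k ∈ Θ)).card : ℝ)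
        + (((Finset.range (M n)).filter (fun k => p n k ∈ F)).card : ℝ) = (M n : ℝ) := by
      rw [← hFeq]
      exact_mod_cast congrArg (Nat.cast (R := ℝ)) (hsplit.trans (Finset.card_range (M n)))
    have hMN : (M n : ℝ) = (N n : ℝ) + 1 := by exact_mod_cast rfl
    nlinarith [hM1 n, hN2', hsplit']
  -- bound for bounded continuous nnreal functions
  have hbdd : ∀ f : X →ᵇ ℝ≥0, ∃ B : ℝ≥0, ∀ x : X, f x ≤ B := by
    intro f
    obtain ⟨C, hC⟩ := f.bounded
    refine ⟨f (p 0 0) + C.toNNReal, fun x => ?_⟩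
    have h1 := hC x (p 0 0)
    rw [NNReal.dist_eq] at h1
    have h2 : ((f x : ℝ≥0) : ℝ) - ((f (p 0 0) : ℝ≥0) : ℝ) ≤ C := (le_abs_self _).trans h1
    have h3 : (0:ℝ) ≤ C := le_trans (abs_nonneg _) h1
    have : ((f x : ℝ≥0) : ℝ) ≤ ((f (p 0 0) + C.toNNReal : ℝ≥0) : ℝ) := by
      push_cast [Real.coe_toNNReal C h3]
      linarith
    exact_mod_cast this
  choose Bf hBf using hbdd
  -- the empirical sums
  set Sum : ℕ → (X →ᵇ ℝ≥0) → ℝ≥0 :=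
    fun n f => (∑ k ∈ Finset.range (M n), f (p n k)) / (M n : ℝ≥0) with hSum
  have hSumb : ∀ (f : X →ᵇ ℝ≥0) (n : ℕ), Sum n f ≤ Bf f := by
    intro f n
    rw [hSum]
    rw [div_le_iff₀ (pos_iff_ne_zero.2 (hM0 n))]
    calc ∑ k ∈ Finset.range (M n), f (p n k) ≤ ∑ k ∈ Finset.range (M n), Bf f :=
          Finset.sum_le_sum fun k _ => hBf f (p n k)
      _ = Bf f * (M n : ℝ≥0) := by
          simp [Finset.sum_const, mul_comm]
  set U : Ultrafilter ℕ := Ultrafilter.of atTop with hUdef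
  have hUle : (U : Filter ℕ) ≤ atTop := Ultrafilter.of_le atTop
  have hex : ∀ f : X →ᵇ ℝ≥0, ∃ l : ℝ≥0, Tendsto (fun n => Sum n f) (U : Filter ℕ) (𝓝 l) := by
    intro f
    have hK : IsCompact (Set.Icc (0:ℝ≥0) (Bf f)) := isCompact_Icc
    have hle : (U.map (fun n => Sum n f) : Filter ℝ≥0) ≤ 𝓟 (Set.Icc 0 (Bf f)) := by
      rw [Ultrafilter.coe_map, le_principal_iff, mem_map]
      exact Filter.univ_mem' fun n => ⟨zero_le, hSumb f n⟩
    obtain ⟨l, _, hl⟩ := hK.ultrafilter_le_nhds (U.map (fun n => Sum n f)) hle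
    refine ⟨l, ?_⟩
    rwa [Ultrafilter.coe_map] at hl
  choose Lam hLam using hex
  have hadd : ∀ f g : X →ᵇ ℝ≥0, Lam (f + g) = Lam f + Lam g := by
    intro f g
    refine tendsto_nhds_unique (hLam (f + g)) ?_
    have : (fun n => Sum n (f + g)) = fun n => Sum n f + Sum n g := by
      funext n
      simp only [hSum]
      rw [← add_div, ← Finset.sum_add_distrib]
      rfl
    rw [this]
    exact (hLam f).add (hLam g)
  have hsmul : ∀ (c : ℝ≥0) (f : X →ᵇ ℝ≥0), Lam (c • f) = c * Lam f := by
    intro c f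
    refine tendsto_nhds_unique (hLam (c • f)) ?_
    have : (fun n => Sum n (c • f)) = fun n => c * Sum n f := by
      funext n
      simp only [hSum]
      rw [← mul_div_assoc, Finset.mul_sum]
      rfl
    rw [this]
    exact (tendsto_const_nhds).mul (hLam f)
  have hmono : ∀ f g : X →ᵇ ℝ≥0, (∀ x : X, f x ≤ g x) → Lam f ≤ Lam g := by
    intro f g hfg
    refine le_of_tendsto_of_tendsto (hLam f) (hLam g) (Eventually.of_forall fun n => ?_)
    simp only [hSum, div_eq_mul_inv]
    exact mul_le_mul_left (Finset.sum_le_sum fun k _ => hfg (p n k)) _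
  have hone : Lam 1 = 1 := by
    refine tendsto_nhds_unique (hLam 1) ?_
    have : (fun n => Sum n (1 : X →ᵇ ℝ≥0)) = fun _ => 1 := by
      funext n
      simp only [hSum]
      simp only [BoundedContinuousFunction.coe_one, Pi.one_apply, Finset.sum_const,
        Finset.card_range, nsmul_eq_mul, mul_one]
      exact div_self (hM0 n)
    rw [this]
    exact tendsto_const_nhds
  -- epsilon/2 as an NNReal
  set eps2 : ℝ≥0 := Real.toNNReal (ε/2) with heps2
  have heps2pos : 0 < eps2 := Real.toNNReal_pos.2 (by linarith)
  have hLamF : ∀ f : X →ᵇ ℝ≥0, (∀ x ∈ F, 1 ≤ f x) → eps2 ≤ Lam f := by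
    intro f hf
    refine ge_of_tendsto (hLam f) (Eventually.of_forall fun n => ?_)
    simp only [hSum]
    rw [le_div_iff₀ (pos_iff_ne_zero.2 (hM0 n))]
    have h1 : ((((Finset.range (M n)).filter (fun k => p n k ∈ F)).card : ℝ≥0))
        ≤ ∑ k ∈ Finset.range (M n), f (p n k) := by
      calc ((((Finset.range (M n)).filter (fun k => p n k ∈ F)).card : ℝ≥0))
          = ∑ k ∈ (Finset.range (M n)).filter (fun k => p n k ∈ F), (1:ℝ≥0) := by
            simp
        _ ≤ ∑ k ∈ (Finset.range (M n)).filter (fun k => p n k ∈ F), f (p n k) := by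
            refine Finset.sum_le_sum fun k hk => ?_
            exact hf _ (Finset.mem_filter.1 hk).2
        _ ≤ ∑ k ∈ Finset.range (M n), f (p n k) :=
            Finset.sum_le_sum_of_subset (Finset.filter_subset _ _)
    refine le_trans ?_ h1
    have := hcount n
    have hcast : ((eps2 * (M n : ℝ≥0) : ℝ≥0) : ℝ)
        ≤ ((((((Finset.range (M n)).filter (fun k => p n k ∈ F)).card : ℝ≥0)) : ℝ)) := by
      push_cast
      rw [Real.coe_toNNReal _ (by linarith : (0:ℝ) ≤ ε/2)]
      have hMN : ((N n : ℝ) + 1) = ((M n : ℕ) : ℝ) := by push_cast [hM]; ring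
      exact this
    exact_mod_cast hcast
  -- invariance of Lam
  have hinv : ∀ f : X →ᵇ ℝ≥0, Lam (f.compContinuous ⟨T, hT⟩) = Lam f := by
    intro f
    set fT : X →ᵇ ℝ≥0 := f.compContinuous ⟨T, hT⟩ with hfT
    have hdiff : Tendsto (fun n => ((Sum n fT : ℝ≥0) : ℝ) - ((Sum n f : ℝ≥0) : ℝ))
        atTop (𝓝 0) := by
      rw [Metric.tendsto_atTop]
      intro η hη
      -- uniform continuity of the real-valued version of f
      have huc : UniformContinuous (fun x : X => ((f x : ℝ≥0) : ℝ)) :=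
        CompactSpace.uniformContinuous_of_continuous (NNReal.continuous_coe.comp f.continuous)
      obtain ⟨θ, hθpos, hθ⟩ := Metric.uniformContinuous_iff.1 huc (η/4) (by linarith)
      obtain ⟨K₁, hK₁⟩ := exists_nat_gt (1/θ)
      have htail : Tendsto (fun n : ℕ => 2 * ((Bf f : ℝ≥0) : ℝ) / ((n:ℝ)+1)) atTop (𝓝 0) := by
        have h0 := tendsto_const_div_atTop_nhds_zero_nat (2 * ((Bf f : ℝ≥0) : ℝ))
        have h1 := h0.comp (tendsto_add_atTop_nat 1)
        have heq : (fun n : ℕ => 2 * ((Bf f : ℝ≥0) : ℝ) / ((n:ℝ)+1))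
            = (fun m : ℕ => 2 * ((Bf f : ℝ≥0) : ℝ) / (m:ℝ)) ∘ (fun n : ℕ => n + 1) := by
          funext n
          simp only [Function.comp_apply]
          push_cast
          ring
        rw [heq]
        exact h1
      have hev := htail.eventually_lt_const (show (0:ℝ) < η/2 by linarith)
      rw [eventually_atTop] at hev
      obtain ⟨K₂, hK₂⟩ := hev
      refine ⟨max K₁ K₂, fun n hn => ?_⟩
      have hnK₁ : K₁ ≤ n := le_trans (le_max_left _ _) hn
      have hnK₂ : K₂ ≤ n := le_trans (le_max_right _ _) hn
      -- abbreviations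
      set a : ℕ → ℝ := fun k => ((f (p n k) : ℝ≥0) : ℝ) with ha
      set b : ℕ → ℝ := fun k => ((f (T (p n k)) : ℝ≥0) : ℝ) with hb
      have hcoe : ∀ g : X →ᵇ ℝ≥0, ((Sum n g : ℝ≥0) : ℝ)
          = (∑ k ∈ Finset.range (M n), ((g (p n k) : ℝ≥0) : ℝ)) / (M n : ℝ) := by
        intro g
        simp only [hSum]
        push_cast
        ring
      have hstep : ∀ k : ℕ, |b k - a (k+1)| ≤ η/4 := by
        intro k
        have hdistk : dist (p n (k+1)) (T (p n k)) ≤ 1/((n:ℝ)+1) := hp n k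
        have hθk : dist (p n (k+1)) (T (p n k)) < θ := by
          refine lt_of_le_of_lt hdistk ?_
          rw [div_lt_iff₀ (by positivity)]
          rw [div_lt_iff₀ hθpos] at hK₁
          have : (K₁:ℝ) ≤ n := Nat.cast_le.2 hnK₁
          nlinarith [hθpos.le]
        have := hθ (dist_comm (p n (k+1)) (T (p n k)) ▸ hθk)
        rw [Real.dist_eq] at this
        exact le_of_lt this
      have htel : |∑ k ∈ Finset.range (M n), (a (k+1) - a k)| ≤ 2 * ((Bf f : ℝ≥0) : ℝ) := by
        rw [Finset.sum_range_sub a (M n)]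
        have h1 : a (M n) ≤ ((Bf f : ℝ≥0) : ℝ) := by exact_mod_cast hBf f (p n (M n))
        have h2 : a 0 ≤ ((Bf f : ℝ≥0) : ℝ) := by exact_mod_cast hBf f (p n 0)
        have h3 : 0 ≤ a (M n) := (f (p n (M n))).coe_nonneg
        have h4 : 0 ≤ a 0 := (f (p n 0)).coe_nonneg
        rw [abs_le]
        constructor <;> linarith
      have hsum_split : ∑ k ∈ Finset.range (M n), (b k - a k)
          = (∑ k ∈ Finset.range (M n), (b k - a (k+1)))
            + ∑ k ∈ Finset.range (M n), (a (k+1) - a k) := by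
        rw [← Finset.sum_add_distrib]
        refine Finset.sum_congr rfl fun k _ => by ring
      have hnum : |∑ k ∈ Finset.range (M n), (b k - a k)|
          ≤ (M n : ℝ) * (η/4) + 2 * ((Bf f : ℝ≥0) : ℝ) := by
        rw [hsum_split]
        refine le_trans (abs_add_le _ _) (add_le_add ?_ htel)
        refine le_trans (Finset.abs_sum_le_sum_abs _ _) ?_
        calc ∑ k ∈ Finset.range (M n), |b k - a (k+1)|
            ≤ ∑ _k ∈ Finset.range (M n), (η/4) := Finset.sum_le_sum fun k _ => hstep k
          _ = (M n : ℝ) * (η/4) := by simp [Finset.sum_const, mul_comm]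
      have hfTcoe : ∀ k : ℕ, ((fT (p n k) : ℝ≥0) : ℝ) = b k := fun k => rfl
      rw [Real.dist_eq, sub_zero]
      have hrewrite : ((Sum n fT : ℝ≥0) : ℝ) - ((Sum n f : ℝ≥0) : ℝ)
          = (∑ k ∈ Finset.range (M n), (b k - a k)) / (M n : ℝ) := by
        rw [hcoe fT, hcoe f]
        rw [Finset.sum_sub_distrib]
        rw [div_sub_div_same]
        congr 1
      rw [hrewrite, abs_div, abs_of_pos (hM0' n)]
      rw [div_lt_iff₀ (hM0' n)]
      have hMbig : 2 * ((Bf f : ℝ≥0) : ℝ) < (η/2) * (M n : ℝ) := by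
        have h2 := hK₂ n hnK₂
        rw [div_lt_iff₀ (by positivity : (0:ℝ) < (n:ℝ)+1)] at h2
        have hMge : ((n:ℝ)+1) ≤ (M n : ℝ) := hMn n
        nlinarith [hη]
      calc |∑ k ∈ Finset.range (M n), (b k - a k)|
          ≤ (M n : ℝ) * (η/4) + 2 * ((Bf f : ℝ≥0) : ℝ) := hnum
        _ < (M n : ℝ) * (η/4) + (η/2) * (M n : ℝ) := by linarith
        _ ≤ η * (M n : ℝ) := by nlinarith [hM0' n, hη]
    have h1 : Tendsto (fun n => ((Sum n fT : ℝ≥0) : ℝ)) (U : Filter ℕ) (𝓝 ((Lam fT : ℝ≥0) : ℝ)) :=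
      (NNReal.tendsto_coe.2 (hLam fT))
    have h2 : Tendsto (fun n => ((Sum n f : ℝ≥0) : ℝ)) (U : Filter ℕ) (𝓝 ((Lam f : ℝ≥0) : ℝ)) :=
      (NNReal.tendsto_coe.2 (hLam f))
    have h3 := hdiff.mono_left hUle
    have h4 := tendsto_nhds_unique (h1.sub h2) h3
    have h5 : ((Lam fT : ℝ≥0) : ℝ) = ((Lam f : ℝ≥0) : ℝ) := by linarith [sub_eq_zero.1 h4]
    exact_mod_cast h5
  -- bundle as a linear functional
  let E : CompactlySupportedContinuousMap X ℝ≥0 → X →ᵇ ℝ≥0 :=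
    fun g => BoundedContinuousFunction.mkOfCompact (g : C(X, ℝ≥0))
  let E' : (X →ᵇ ℝ≥0) → CompactlySupportedContinuousMap X ℝ≥0 :=
    fun h => CompactlySupportedContinuousMap.continuousMapEquiv h.toContinuousMap
  set LamL : CompactlySupportedContinuousMap X ℝ≥0 →ₗ[ℝ≥0] ℝ≥0 :=
    { toFun := fun g => Lam (E g),
      map_add' := fun f g => by
        rw [← hadd]
        exact congrArg Lam (by ext x; rfl),
      map_smul' := fun c f => by
        simp only [RingHom.id_apply]
        rw [smul_eq_mul, ← hsmul]
        exact congrArg Lam (by ext x; rfl) } with hLamL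
  have hLamLapp : ∀ f : CompactlySupportedContinuousMap X ℝ≥0, LamL f = Lam (E f) :=
    fun _ => rfl
  have hLamLapp' : ∀ h : X →ᵇ ℝ≥0, LamL (E' h) = Lam h :=
    fun h => congrArg Lam (by ext x; rfl)
  -- disjoint additivity of the Riesz content (Urysohn)
  have hsupdis : ∀ K₁ K₂ : Compacts X, Disjoint (K₁ : Set X) (K₂ : Set X) →
      IsClosed (K₁ : Set X) → IsClosed (K₂ : Set X) →
      rieszContentAux LamL (K₁ ⊔ K₂) = rieszContentAux LamL K₁ + rieszContentAux LamL K₂ := by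
    intro K₁ K₂ hdis _ hcl₂
    refine le_antisymm (rieszContentAux_sup_le LamL K₁ K₂) ?_
    refine le_csInf (rieszContentAux_image_nonempty LamL (K₁ ⊔ K₂)) ?_
    rintro b ⟨f0, hf0, rfl⟩
    rw [hLamLapp]
    set f := E f0
    have hf : ∀ x ∈ (K₁ ⊔ K₂), 1 ≤ f x := hf0
    obtain ⟨g, hg0, hg1, hg01⟩ := exists_continuous_zero_one_of_isCompact K₁.2 hcl₂ hdis
    have hgc : Continuous fun x : X => Real.toNNReal (g x) * f x :=
      (continuous_real_toNNReal.comp g.continuous).mul f.continuous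
    have hgc' : Continuous fun x : X => Real.toNNReal (1 - g x) * f x :=
      (continuous_real_toNNReal.comp (continuous_const.sub g.continuous)).mul f.continuous
    have hb1 : ∀ x : X, Real.toNNReal (g x) * f x ≤ Bf f := by
      intro x
      calc Real.toNNReal (g x) * f x ≤ 1 * f x := by
            refine mul_le_mul_of_nonneg_right ?_ zero_le
            rw [← Real.toNNReal_one]
            exact Real.toNNReal_le_toNNReal (hg01 x).2
        _ = f x := one_mul _
        _ ≤ Bf f := hBf f x
    have hb2 : ∀ x : X, Real.toNNReal (1 - g x) * f x ≤ Bf f := by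
      intro x
      calc Real.toNNReal (1 - g x) * f x ≤ 1 * f x := by
            refine mul_le_mul_of_nonneg_right ?_ zero_le
            rw [← Real.toNNReal_one]
            exact Real.toNNReal_le_toNNReal (by linarith [(hg01 x).1])
        _ = f x := one_mul _
        _ ≤ Bf f := hBf f x
    have hdistb : ∀ (h : X → ℝ≥0), (∀ x, h x ≤ Bf f) → ∀ x y, dist (h x) (h y) ≤ (Bf f : ℝ) := by
      intro h hh x y
      rw [NNReal.dist_eq, abs_le]
      constructor
      · have := hh y
        have h0 : (0:ℝ) ≤ h x := (h x).coe_nonneg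
        have : ((h y : ℝ≥0) : ℝ) ≤ Bf f := by exact_mod_cast this
        linarith
      · have := hh x
        have h0 : (0:ℝ) ≤ h y := (h y).coe_nonneg
        have : ((h x : ℝ≥0) : ℝ) ≤ Bf f := by exact_mod_cast this
        linarith
    set h₁ : X →ᵇ ℝ≥0 := BoundedContinuousFunction.mkOfBound
      ⟨fun x => Real.toNNReal (g x) * f x, hgc⟩ (Bf f) (hdistb _ hb1) with hh₁
    set h₂ : X →ᵇ ℝ≥0 := BoundedContinuousFunction.mkOfBound
      ⟨fun x => Real.toNNReal (1 - g x) * f x, hgc'⟩ (Bf f) (hdistb _ hb2) with hh₂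
    have hsum12 : h₁ + h₂ = f := by
      have hpt : ∀ x : X, Real.toNNReal (g x) * f x + Real.toNNReal (1 - g x) * f x = f x := by
        intro x
        rw [← add_mul]
        have : Real.toNNReal (g x) + Real.toNNReal (1 - g x) = 1 := by
          rw [← Real.toNNReal_add (hg01 x).1 (by linarith [(hg01 x).2])]
          norm_num
        rw [this, one_mul]
      ext x
      simp only [BoundedContinuousFunction.coe_add, Pi.add_apply]
      exact_mod_cast hpt x
    have hK₁h₂ : ∀ x ∈ (K₁ : Set X), 1 ≤ h₂ x := by
      intro x hx
      have hgx : g x = 0 := hg0 hx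
      show 1 ≤ Real.toNNReal (1 - g x) * f x
      rw [hgx]
      norm_num
      exact hf x (Set.mem_union_left _ hx)
    have hK₂h₁ : ∀ x ∈ (K₂ : Set X), 1 ≤ h₁ x := by
      intro x hx
      have hgx : g x = 1 := hg1 hx
      show 1 ≤ Real.toNNReal (g x) * f x
      rw [hgx]
      norm_num
      exact hf x (Set.mem_union_right _ hx)
    calc rieszContentAux LamL K₁ + rieszContentAux LamL K₂
        ≤ Lam h₂ + Lam h₁ := add_le_add
          ((rieszContentAux_le LamL (f := E' h₂) hK₁h₂).trans_eq (hLamLapp' h₂))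
          ((rieszContentAux_le LamL (f := E' h₁) hK₂h₁).trans_eq (hLamLapp' h₁))
      _ = Lam (h₂ + h₁) := (hadd h₂ h₁).symm
      _ = Lam f := by rw [add_comm h₂ h₁, hsum12]
  -- build the content and its measure
  set C : MeasureTheory.Content X :=
    { toFun := rieszContentAux LamL
      mono' := fun K₁ K₂ h => rieszContentAux_mono LamL h
      sup_disjoint' := hsupdis
      sup_le' := rieszContentAux_sup_le LamL } with hC
  letI : MeasurableSpace X := borel X
  haveI : BorelSpace X := ⟨rfl⟩
  set μ : Measure X := C.measure with hμ
  have hTm : Measurable T := hT.measurable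
  -- total mass one
  have hCuniv : rieszContentAux LamL ⟨Set.univ, isCompact_univ⟩ = 1 := by
    refine le_antisymm ?_ ?_
    · have h1 : rieszContentAux LamL ⟨Set.univ, isCompact_univ⟩ ≤ Lam 1 :=
        (rieszContentAux_le LamL (f := E' 1) (fun x _ => le_refl _)).trans_eq (hLamLapp' 1)
      rwa [hone] at h1
    · refine le_csInf (rieszContentAux_image_nonempty LamL _) ?_
      rintro b ⟨f, hf, rfl⟩
      have : Lam 1 ≤ Lam (E f) := hmono 1 _ fun x => hf x trivial
      rwa [hone] at this
  have hμuniv : μ Set.univ = 1 := by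
    rw [hμ, C.measure_apply MeasurableSet.univ]
    have h1 : C.outerMeasure Set.univ = C.innerContent ⟨Set.univ, isOpen_univ⟩ := by
      have := C.outerMeasure_opens ⟨Set.univ, isOpen_univ⟩
      simpa using this
    rw [h1]
    have h2 : C.innerContent ⟨Set.univ, isOpen_univ⟩
        = (C ⟨Set.univ, isCompact_univ⟩ : ℝ≥0∞) := by
      refine le_antisymm (C.innerContent_le _ _ (by exact subset_rfl)) ?_
      exact C.le_innerContent _ _ (by exact subset_rfl)
    rw [h2]
    have : C ⟨Set.univ, isCompact_univ⟩ = rieszContentAux LamL ⟨Set.univ, isCompact_univ⟩ := rfl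
    rw [this, hCuniv]
    norm_num
  haveI hμprob : IsProbabilityMeasure μ := ⟨hμuniv⟩
  -- upper bound: measure of a compact by test functions
  have hupper : ∀ (K : Compacts X) (f : X →ᵇ ℝ≥0), (∀ x ∈ (K : Set X), 1 ≤ f x) →
      μ (K : Set X) ≤ ((Lam f : ℝ≥0) : ℝ≥0∞) := by
    intro K f hf
    refine ENNReal.le_of_forall_pos_le_add fun η hη _ => ?_
    set η' : ℝ≥0 := η / (Lam f + 1) with hη'
    have hη'pos : 0 < η' := by
      rw [hη']
      positivity
    have hη'mul : η' * Lam f ≤ η := by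
      rw [hη', div_mul_eq_mul_div, div_le_iff₀ (by positivity)]
      exact mul_le_mul_right (by simp [le_add_iff_nonneg_left]) η
    set V : Set X := {x : X | (1 + η')⁻¹ < f x} with hV
    have hVopen : IsOpen V := isOpen_lt continuous_const f.continuous
    have hKV : (K : Set X) ⊆ V := by
      intro x hx
      have h1 : (1 + η')⁻¹ < 1 := by
        rw [inv_lt_one_iff₀]
        right
        exact lt_add_of_pos_right 1 hη'pos
      exact lt_of_lt_of_le h1 (hf x hx)
    have hμK : μ (K : Set X) ≤ μ V := measure_mono hKV
    have hμV : μ V = C.innerContent ⟨V, hVopen⟩ := by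
      rw [hμ, C.measure_apply hVopen.measurableSet]
      exact C.outerMeasure_opens ⟨V, hVopen⟩
    have hIC : C.innerContent ⟨V, hVopen⟩ ≤ ((Lam f + η : ℝ≥0) : ℝ≥0∞) := by
      refine iSup₂_le fun K' hK' => ?_
      have hfK' : ∀ x ∈ (K' : Set X), 1 ≤ ((1 + η') • f) x := by
        intro x hx
        have h1 : (1 + η')⁻¹ ≤ f x := le_of_lt (hK' hx)
        have h2 : ((1 + η') • f) x = (1 + η') * f x := rfl
        rw [h2]
        calc (1:ℝ≥0) = (1 + η') * (1 + η')⁻¹ := by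
              rw [mul_inv_cancel₀]
              positivity
          _ ≤ (1 + η') * f x := mul_le_mul_right h1 _
      have h3 : rieszContentAux LamL K' ≤ LamL (E' ((1 + η') • f)) :=
        rieszContentAux_le LamL (f := E' ((1 + η') • f)) hfK'
      rw [hLamLapp', hsmul] at h3
      have h5 : rieszContentAux LamL K' ≤ Lam f + η := by
        calc rieszContentAux LamL K' ≤ (1 + η') * Lam f := h3
          _ = Lam f + η' * Lam f := by ring
          _ ≤ Lam f + η := add_le_add le_rfl hη'mul
      show ((rieszContentAux LamL K' : ℝ≥0) : ℝ≥0∞) ≤ ((Lam f + η : ℝ≥0) : ℝ≥0∞)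
      exact_mod_cast h5
    calc μ (K : Set X) ≤ C.innerContent ⟨V, hVopen⟩ := hμV ▸ hμK
      _ ≤ ((Lam f + η : ℝ≥0) : ℝ≥0∞) := hIC
      _ = ((Lam f : ℝ≥0) : ℝ≥0∞) + η := by push_cast; rfl
  -- invariance on compacts
  have hinvK : ∀ K : Compacts X, μ (T ⁻¹' (K : Set X)) ≤ μ (K : Set X) := by
    intro K
    set KT : Compacts X := ⟨T ⁻¹' (K : Set X), (K.2.isClosed.preimage hT).isCompact⟩ with hKT
    have hfin : μ (KT : Set X) ≠ ⊤ := measure_ne_top μ _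
    set r : ℝ≥0 := (μ (KT : Set X)).toNNReal with hrdef
    have hr : μ (KT : Set X) = (r : ℝ≥0∞) := (ENNReal.coe_toNNReal hfin).symm
    have hrle : ∀ f : X →ᵇ ℝ≥0, (∀ x ∈ (K : Set X), 1 ≤ f x) → r ≤ Lam f := by
      intro f hf
      have h1 : ∀ x ∈ (KT : Set X), 1 ≤ (f.compContinuous ⟨T, hT⟩) x := fun x hx => hf (T x) hx
      have h2 := hupper KT _ h1
      rw [hinv f] at h2
      rw [hr] at h2
      exact_mod_cast h2
    have h3 : r ≤ rieszContentAux LamL K := by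
      refine le_csInf (rieszContentAux_image_nonempty LamL K) ?_
      rintro b ⟨f, hf, rfl⟩
      exact hrle (E f) hf
    have h4 : ((rieszContentAux LamL K : ℝ≥0) : ℝ≥0∞) ≤ μ (K : Set X) := by
      have he : C.measure (K : Set X) = C.outerMeasure (K : Set X) :=
        C.measure_apply K.2.isClosed.measurableSet
      rw [hμ, he]
      exact C.le_outerMeasure_compacts K
    calc μ (T ⁻¹' (K : Set X)) = ((r : ℝ≥0) : ℝ≥0∞) := hr
      _ ≤ ((rieszContentAux LamL K : ℝ≥0) : ℝ≥0∞) := by exact_mod_cast h3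
      _ ≤ μ (K : Set X) := h4
  -- the measure is T-invariant
  set ν : Measure X := Measure.map T μ with hν
  haveI hνprob : IsProbabilityMeasure ν := Measure.isProbabilityMeasure_map hTm.aemeasurable
  have hopen : ∀ V : Set X, IsOpen V → μ V ≤ ν V := by
    intro V hVopen
    have hVc : IsCompact Vᶜ := hVopen.isClosed_compl.isCompact
    have h1 : ν Vᶜ ≤ μ Vᶜ := by
      rw [hν, Measure.map_apply hTm hVopen.isClosed_compl.measurableSet]
      exact hinvK ⟨Vᶜ, hVc⟩
    have h2 : μ V = 1 - μ Vᶜ := by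
      have := prob_compl_eq_one_sub (μ := μ) hVopen.isClosed_compl.measurableSet
      rwa [compl_compl] at this
    have h3 : ν V = 1 - ν Vᶜ := by
      have := prob_compl_eq_one_sub (μ := ν) hVopen.isClosed_compl.measurableSet
      rwa [compl_compl] at this
    rw [h2, h3]
    exact tsub_le_tsub le_rfl h1
  have hle : ∀ A : Set X, μ A ≤ ν A := by
    intro A
    rw [measure_eq_iInf_isOpen A ν]
    refine le_iInf fun V => le_iInf fun hAV => le_iInf fun hVopen => ?_
    exact (measure_mono hAV).trans (hopen V hVopen)
  have hmap : ν = μ := by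
    refine Measure.ext fun A hA => ?_
    have h1 := hle A
    have h2 := hle Aᶜ
    have h3 : μ A + μ Aᶜ = 1 := by rw [measure_add_measure_compl hA]; exact hμuniv
    have h4 : ν A + ν Aᶜ = 1 := by rw [measure_add_measure_compl hA]; exact measure_univ
    have hfa : μ A ≠ ⊤ := measure_ne_top μ A
    have hfb : ν A ≠ ⊤ := measure_ne_top ν A
    have hfc : μ Aᶜ ≠ ⊤ := measure_ne_top μ _
    have hfd : ν Aᶜ ≠ ⊤ := measure_ne_top ν _
    have ha := ENNReal.toReal_le_toReal hfa hfb |>.2 h1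
    have hb := ENNReal.toReal_le_toReal hfc hfd |>.2 h2
    have hc : (μ A).toReal + (μ Aᶜ).toReal = 1 := by
      rw [← ENNReal.toReal_add hfa hfc, h3]; norm_num
    have hd : (ν A).toReal + (ν Aᶜ).toReal = 1 := by
      rw [← ENNReal.toReal_add hfb hfd, h4]; norm_num
    have : (ν A).toReal = (μ A).toReal := by linarith
    exact ((ENNReal.toReal_eq_toReal_iff' hfb hfa).1 this)
  -- Poincaré recurrence
  have hMP : MeasurePreserving T μ μ := ⟨hTm, hmap⟩
  have hcons : Conservative T μ := hMP.conservative
  have hae := hcons.ae_frequently_mem_of_mem_nhds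
  have hRnull : μ Rᶜ = 0 := by
    refine measure_mono_null ?_ (ae_iff.1 hae)
    intro x hx
    simp only [Set.mem_setOf_eq]
    intro hP
    exact hx (mem_recur_of_freq hP)
  have hFR : F ⊆ Rᶜ := by
    intro x hx hxR
    exact hx (Metric.self_subset_thickening hε R hxR)
  have hFzero : μ F = 0 := measure_mono_null hFR hRnull
  -- but F has measure at least eps2 > 0
  have hFcl : IsClosed F := (Metric.isOpen_thickening).isClosed_compl
  have hFcpt : IsCompact F := hFcl.isCompact
  have hCF : eps2 ≤ rieszContentAux LamL ⟨F, hFcpt⟩ := by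
    refine le_csInf (rieszContentAux_image_nonempty LamL _) ?_
    rintro b ⟨f, hf, rfl⟩
    exact hLamF (E f) hf
  have hFpos : ((eps2 : ℝ≥0) : ℝ≥0∞) ≤ μ F := by
    have he : C.measure F = C.outerMeasure F := C.measure_apply hFcl.measurableSet
    rw [hμ, he]
    refine le_trans ?_ (C.le_outerMeasure_compacts ⟨F, hFcpt⟩)
    show ((eps2 : ℝ≥0) : ℝ≥0∞) ≤ ((rieszContentAux LamL ⟨F, hFcpt⟩ : ℝ≥0) : ℝ≥0∞)
    exact_mod_cast hCF
  rw [hFzero] at hFpos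
  simp only [nonpos_iff_eq_zero, ENNReal.coe_eq_zero] at hFpos
  exact absurd hFpos (ne_of_gt heps2pos)




theorem stmt16 [MetricSpace X] [CompactSpace X] (T : X → X) (hT : Continuous T) :
    ∀ ε > (0 : ℝ), ∃ δ > (0 : ℝ), ∀ p : ℕ → X, IsPseudoTraj T δ p →
      1 - ε < Filter.liminf
        (fun N : ℕ => cnt {k : ℕ | p k ∈ Metric.thickening ε (RecurrentPts T)} N / (N : ℝ))
        atTop := by
  intro ε hε
  rcases le_or_gt ε 1 with hle | hgt
  · exact key T hT hε hle
  · obtain ⟨δ, hδ, hkey⟩ := key T hT one_pos le_rfl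
    refine ⟨δ, hδ, fun p hp => ?_⟩
    have h2 := hkey p hp
    have hbddabove : ∀ θ : ℝ, IsBoundedUnder (· ≤ ·) atTop
        (fun N : ℕ => cnt {k : ℕ | p k ∈ Metric.thickening θ (RecurrentPts T)} N / (N : ℝ)) := by
      intro θ
      apply isBoundedUnder_of
      refine ⟨2, fun N => ?_⟩
      rcases Nat.eq_zero_or_pos N with h0 | hN
      · simp [h0, cnt]
      have hN0 : (0:ℝ) < N := by exact_mod_cast hN
      have hcard : (((Finset.range (N + 1)).filter
          (· ∈ {k : ℕ | p k ∈ Metric.thickening θ (RecurrentPts T)})).card : ℝ) ≤ (N + 1 : ℝ) := by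
        exact_mod_cast Finset.card_le_card (Finset.filter_subset _ _) |>.trans
          (le_of_eq (Finset.card_range (N+1)))
      simp only [cnt]
      rw [div_le_iff₀ hN0]
      have : (N:ℝ) + 1 ≤ 2 * N := by linarith [hN0, (by exact_mod_cast hN : (1:ℝ) ≤ N)]
      linarith
    have hmono : Filter.liminf
        (fun N : ℕ => cnt {k : ℕ | p k ∈ Metric.thickening 1 (RecurrentPts T)} N / (N : ℝ)) atTop
        ≤ Filter.liminf
        (fun N : ℕ => cnt {k : ℕ | p k ∈ Metric.thickening ε (RecurrentPts T)} N / (N : ℝ))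
        atTop := by
      refine liminf_le_liminf (Eventually.of_forall fun N => ?_) ?_ ?_
      · have hsub : {k : ℕ | p k ∈ Metric.thickening 1 (RecurrentPts T)}
            ⊆ {k : ℕ | p k ∈ Metric.thickening ε (RecurrentPts T)} := by
          intro k hk
          exact Metric.thickening_mono hgt.le _ hk
        have hc : cnt {k : ℕ | p k ∈ Metric.thickening 1 (RecurrentPts T)} N
            ≤ cnt {k : ℕ | p k ∈ Metric.thickening ε (RecurrentPts T)} N := by
          simp only [cnt]
          refine Nat.cast_le.2 (Finset.card_le_card ?_)
          intro k hk
          rw [Finset.mem_filter] at hk ⊢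
          exact ⟨hk.1, hsub hk.2⟩
        rcases Nat.eq_zero_or_pos N with h0 | hN
        · simp [h0]
        have hN0 : (0:ℝ) < N := by exact_mod_cast hN
        exact div_le_div_of_nonneg_right hc hN0.le
      · apply isBoundedUnder_of
        refine ⟨0, fun N => ?_⟩
        simp only [cnt]
        positivity
      · exact (hbddabove ε).isCoboundedUnder_flip
    linarith
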